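/- Let σv : [t,t*] → ℝ^d be bounded measurable with c := inf_{s} ‖σv(s)‖ > 0, and let a₁ : [t,t*] → ℝ be continuous. Suppose that for every t' ∈ (t,t*), ∫_{t'}^{t*} a₁(s)² ‖σv(s)‖² ds > 0 and (1/2)∫_{t'}^{t*} a₁(s)(1−a₁(s))‖σv(s)‖² ds + λ·√(∫_{t'}^{t*} a₁(s)²‖σv(s)‖² ds) = 0 for a fixed constant λ ≠ 0. Then, using Cauchy–Schwarz, |√(∫_{t'}^{t*} a₁(s)²‖σv(s)‖² ds) − 2λ| ≤ √(∫_{t'}^{t*} ‖σv(s)‖² ds) for all t' ∈ (t,t*), and letting t' ↑ t* yields a contradiction; hence no such a₁ exists. -/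

import Mathlib

open MeasureTheory intervalIntegral

set_option maxHeartbeats 1000000 in
/-- Nonexistence of an affine equilibrium coefficient for `α ≠ 1/2`: under the stated
integral identities with `λ ≠ 0`, the Cauchy–Schwarz inequality
`|√(∫ a₁²‖σv‖²) − 2λ| ≤ √(∫ ‖σv‖²)` holds on every subinterval, and letting
`t' ↑ t*` yields a contradiction, so no such `a₁` exists. -/
theorem stmt_10 {d : ℕ} (t tstar : ℝ) (ht : t < tstar)
    (σv : ℝ → EuclideanSpace ℝ (Fin d)) (hσvmeas : Measurable σv)
    (C : ℝ) (hσvbd : ∀ s ∈ Set.Icc t tstar, ‖σv s‖ ≤ C)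
    (c : ℝ) (hc : 0 < c) (hσvlow : ∀ s ∈ Set.Icc t tstar, c ≤ ‖σv s‖)
    (a₁ : ℝ → ℝ) (ha₁ : ContinuousOn a₁ (Set.Icc t tstar))
    (lam : ℝ) (hlam : lam ≠ 0)
    (hpos : ∀ t' ∈ Set.Ioo t tstar,
      0 < ∫ s in t'..tstar, (a₁ s) ^ 2 * ‖σv s‖ ^ 2)
    (heq : ∀ t' ∈ Set.Ioo t tstar,
      (1 / 2) * (∫ s in t'..tstar, a₁ s * (1 - a₁ s) * ‖σv s‖ ^ 2) +
        lam * Real.sqrt (∫ s in t'..tstar, (a₁ s) ^ 2 * ‖σv s‖ ^ 2) = 0) :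
    (∀ t' ∈ Set.Ioo t tstar,
      |Real.sqrt (∫ s in t'..tstar, (a₁ s) ^ 2 * ‖σv s‖ ^ 2) - 2 * lam| ≤
        Real.sqrt (∫ s in t'..tstar, ‖σv s‖ ^ 2)) ∧ False := by
  have htmem : t ∈ Set.Icc t tstar := ⟨le_refl t, ht.le⟩
  have hC : 0 < C := lt_of_lt_of_le hc (le_trans (hσvlow t htmem) (hσvbd t htmem))
  obtain ⟨A, hA⟩ := isCompact_Icc.exists_bound_of_continuousOn ha₁
  have hA0 : 0 ≤ A := le_trans (norm_nonneg _) (hA t htmem)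
  have hgmeas : Measurable fun s => ‖σv s‖ ^ 2 := (hσvmeas.norm).pow_const 2
  -- generic integrability
  have hint : ∀ (φ : ℝ → ℝ), ContinuousOn φ (Set.Icc t tstar) →
      ∀ t' ∈ Set.Icc t tstar, IntervalIntegrable (fun s => φ s * ‖σv s‖ ^ 2)
        MeasureTheory.volume t' tstar := by
    intro φ hφ t' ht'
    obtain ⟨B, hB⟩ := isCompact_Icc.exists_bound_of_continuousOn hφ
    rw [intervalIntegrable_iff_integrableOn_Ioc_of_le ht'.2]
    have hsub : Set.Ioc t' tstar ⊆ Set.Icc t tstar := fun x hx =>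
      ⟨le_trans ht'.1 hx.1.le, hx.2⟩
    have hm : AEStronglyMeasurable (fun s => φ s * ‖σv s‖ ^ 2)
        (MeasureTheory.volume.restrict (Set.Ioc t' tstar)) :=
      ((hφ.mono hsub).aestronglyMeasurable measurableSet_Ioc).mul
        hgmeas.aestronglyMeasurable.restrict
    refine ⟨hm, MeasureTheory.HasFiniteIntegral.restrict_of_bounded
      (C := B * C ^ 2) measure_Ioc_lt_top ?_⟩
    · refine ae_restrict_of_forall_mem measurableSet_Ioc fun x hx => ?_
      have h1 : ‖φ x‖ ≤ B := hB x (hsub hx)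
      have h2 : ‖σv x‖ ≤ C := hσvbd x (hsub hx)
      have hB0 : 0 ≤ B := le_trans (norm_nonneg _) h1
      calc ‖φ x * ‖σv x‖ ^ 2‖ = ‖φ x‖ * ‖σv x‖ ^ 2 := by
            rw [norm_mul]; simp [abs_of_nonneg (sq_nonneg ‖σv x‖)]
        _ ≤ B * C ^ 2 := by
            apply mul_le_mul h1 (pow_le_pow_left₀ (norm_nonneg _) h2 2)
              (sq_nonneg _) hB0
  -- main Cauchy–Schwarz claim
  have key : ∀ t' ∈ Set.Ioo t tstar,
      |Real.sqrt (∫ s in t'..tstar, (a₁ s) ^ 2 * ‖σv s‖ ^ 2) - 2 * lam| ≤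
        Real.sqrt (∫ s in t'..tstar, ‖σv s‖ ^ 2) := by
    intro t' ht'
    have ht'le : t' ≤ tstar := ht'.2.le
    have ht'mem : t' ∈ Set.Icc t tstar := ⟨ht'.1.le, ht'.2.le⟩
    set I := ∫ s in t'..tstar, (a₁ s) ^ 2 * ‖σv s‖ ^ 2 with hIdef
    set K := ∫ s in t'..tstar, a₁ s * ‖σv s‖ ^ 2 with hKdef
    set S := ∫ s in t'..tstar, ‖σv s‖ ^ 2 with hSdef
    have hIint := hint (fun s => (a₁ s) ^ 2) (ha₁.pow 2) t' ht'mem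
    have hKint := hint a₁ ha₁ t' ht'mem
    have hSint : IntervalIntegrable (fun s => ‖σv s‖ ^ 2)
        MeasureTheory.volume t' tstar := by
      have := hint (fun _ => (1 : ℝ)) continuousOn_const t' ht'mem
      simpa using this
    have hIpos : 0 < I := hpos t' ht'
    -- Cauchy–Schwarz : K^2 ≤ S * I
    have hCS : K ^ 2 ≤ S * I := by
      have hquad : ∀ r : ℝ, 0 ≤ S * (r * r) + (2 * K) * r + I := by
        intro r
        have hnn : 0 ≤ ∫ s in t'..tstar, (a₁ s + r) ^ 2 * ‖σv s‖ ^ 2 :=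
          intervalIntegral.integral_nonneg ht'le fun s _ => by positivity
        have hexp : (∫ s in t'..tstar, (a₁ s + r) ^ 2 * ‖σv s‖ ^ 2) =
            I + ((2 * r) * K + (r ^ 2) * S) := by
          have h1 : IntervalIntegrable (fun s => (2 * r) * (a₁ s * ‖σv s‖ ^ 2))
              MeasureTheory.volume t' tstar := hKint.const_mul _
          have h2 : IntervalIntegrable (fun s => (r ^ 2) * ‖σv s‖ ^ 2)
              MeasureTheory.volume t' tstar := hSint.const_mul _
          calc (∫ s in t'..tstar, (a₁ s + r) ^ 2 * ‖σv s‖ ^ 2)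
              = ∫ s in t'..tstar, ((a₁ s) ^ 2 * ‖σv s‖ ^ 2 +
                  ((2 * r) * (a₁ s * ‖σv s‖ ^ 2) + (r ^ 2) * ‖σv s‖ ^ 2)) := by
                apply intervalIntegral.integral_congr
                intro s _
                ring
            _ = I + ((2 * r) * K + (r ^ 2) * S) := by
                rw [intervalIntegral.integral_add hIint (h1.add h2),
                  intervalIntegral.integral_add h1 h2,
                  intervalIntegral.integral_const_mul,
                  intervalIntegral.integral_const_mul]
        rw [hexp] at hnn
        nlinarith [hnn]
      have := discrim_le_zero hquad
      rw [discrim] at this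
      nlinarith [this]
    have hS0 : 0 ≤ S :=
      intervalIntegral.integral_nonneg ht'le fun s _ => sq_nonneg _
    have habsK : |K| ≤ Real.sqrt S * Real.sqrt I := by
      have : |K| = Real.sqrt (K ^ 2) := (Real.sqrt_sq_eq_abs K).symm
      rw [this, ← Real.sqrt_mul hS0]
      exact Real.sqrt_le_sqrt hCS
    -- use the equation
    have heq' := heq t' ht'
    have hJ : (∫ s in t'..tstar, a₁ s * (1 - a₁ s) * ‖σv s‖ ^ 2) = K - I := by
      rw [← intervalIntegral.integral_sub hKint hIint]
      apply intervalIntegral.integral_congr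
      intro s _
      ring
    rw [hJ] at heq'
    have hK : K = I - 2 * lam * Real.sqrt I := by linarith
    have hsqI : Real.sqrt I * Real.sqrt I = I := Real.mul_self_sqrt hIpos.le
    have hIfac : K = Real.sqrt I * (Real.sqrt I - 2 * lam) := by
      rw [hK]; nlinarith [hsqI]
    have hsqIpos : 0 < Real.sqrt I := Real.sqrt_pos.mpr hIpos
    have : Real.sqrt I * |Real.sqrt I - 2 * lam| ≤ Real.sqrt I * Real.sqrt S := by
      calc Real.sqrt I * |Real.sqrt I - 2 * lam|
          = |K| := by rw [hIfac, abs_mul, abs_of_pos hsqIpos]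
        _ ≤ Real.sqrt S * Real.sqrt I := habsK
        _ = Real.sqrt I * Real.sqrt S := by ring
    exact le_of_mul_le_mul_left this hsqIpos
  refine ⟨key, ?_⟩
  -- derive the contradiction by taking t' close to tstar
  set B := (A + 1) * C with hBdef
  have hB0 : 0 < B := by positivity
  set δ := min ((tstar - t) / 2) (lam ^ 2 / (B ^ 2 + 1)) with hδdef
  have hδ0 : 0 < δ := by
    apply lt_min (by linarith)
    positivity
  set t' := tstar - δ with ht'def
  have hδle : δ ≤ (tstar - t) / 2 := min_le_left _ _
  have ht'mem : t' ∈ Set.Ioo t tstar := ⟨by simp only [ht'def]; linarith, by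
    simp only [ht'def]; linarith⟩
  have ht'Icc : t' ∈ Set.Icc t tstar := ⟨ht'mem.1.le, ht'mem.2.le⟩
  set I := ∫ s in t'..tstar, (a₁ s) ^ 2 * ‖σv s‖ ^ 2 with hIdef
  set S := ∫ s in t'..tstar, ‖σv s‖ ^ 2 with hSdef
  have hIint := hint (fun s => (a₁ s) ^ 2) (ha₁.pow 2) t' ht'Icc
  have hSint : IntervalIntegrable (fun s => ‖σv s‖ ^ 2)
      MeasureTheory.volume t' tstar := by
    have := hint (fun _ => (1 : ℝ)) continuousOn_const t' ht'Icc
    simpa using this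
  have hsub : Set.Icc t' tstar ⊆ Set.Icc t tstar := fun x hx =>
    ⟨le_trans ht'mem.1.le hx.1, hx.2⟩
  -- bound S
  have hSbd : S ≤ C ^ 2 * δ := by
    have : S ≤ ∫ _ in t'..tstar, C ^ 2 :=
      intervalIntegral.integral_mono_on ht'mem.2.le hSint
        intervalIntegrable_const fun x hx =>
        pow_le_pow_left₀ (norm_nonneg _) (hσvbd x (hsub hx)) 2
    rw [intervalIntegral.integral_const, smul_eq_mul] at this
    have h2 : tstar - t' = δ := by simp [ht'def]
    rw [h2] at this
    linarith
  -- bound I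
  have hIbd : I ≤ A ^ 2 * C ^ 2 * δ := by
    have : I ≤ ∫ _ in t'..tstar, A ^ 2 * C ^ 2 :=
      intervalIntegral.integral_mono_on ht'mem.2.le hIint
        intervalIntegrable_const fun x hx => by
        have h1 : |a₁ x| ≤ A := hA x (hsub hx)
        have h2 : ‖σv x‖ ≤ C := hσvbd x (hsub hx)
        have h3 : (a₁ x) ^ 2 ≤ A ^ 2 := by
          rw [← sq_abs]; exact pow_le_pow_left₀ (abs_nonneg _) h1 2
        have h4 : ‖σv x‖ ^ 2 ≤ C ^ 2 := pow_le_pow_left₀ (norm_nonneg _) h2 2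
        exact mul_le_mul h3 h4 (sq_nonneg _) (sq_nonneg A)
    rw [intervalIntegral.integral_const, smul_eq_mul] at this
    have h2 : tstar - t' = δ := by simp [ht'def]
    rw [h2] at this
    linarith
  have hI0 : 0 ≤ I := (hpos t' ht'mem).le
  have hS0 : 0 ≤ S :=
    intervalIntegral.integral_nonneg ht'mem.2.le fun s _ => sq_nonneg _
  have hkey := key t' ht'mem
  rw [← hIdef, ← hSdef] at hkey
  -- bounds on square roots
  have hsqS : Real.sqrt S ≤ C * Real.sqrt δ := by
    calc Real.sqrt S ≤ Real.sqrt (C ^ 2 * δ) := Real.sqrt_le_sqrt hSbd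
      _ = C * Real.sqrt δ := by
        rw [Real.sqrt_mul (sq_nonneg C), Real.sqrt_sq hC.le]
  have hsqI : Real.sqrt I ≤ A * C * Real.sqrt δ := by
    calc Real.sqrt I ≤ Real.sqrt (A ^ 2 * C ^ 2 * δ) := Real.sqrt_le_sqrt hIbd
      _ = A * C * Real.sqrt δ := by
        rw [show A ^ 2 * C ^ 2 * δ = (A * C) ^ 2 * δ by ring,
          Real.sqrt_mul (sq_nonneg _), Real.sqrt_sq (by positivity)]
  have h2lam : 2 * |lam| ≤ B * Real.sqrt δ := by
    have h1 : |2 * lam| ≤ |Real.sqrt I - 2 * lam| + Real.sqrt I := by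
      have h3 := abs_sub_abs_le_abs_sub (2 * lam) (Real.sqrt I)
      have h4 : |2 * lam - Real.sqrt I| = |Real.sqrt I - 2 * lam| :=
        abs_sub_comm _ _
      have h2 : |Real.sqrt I| = Real.sqrt I := abs_of_nonneg (Real.sqrt_nonneg _)
      linarith [abs_nonneg (Real.sqrt I)]
    calc 2 * |lam| = |2 * lam| := by rw [abs_mul]; simp
      _ ≤ |Real.sqrt I - 2 * lam| + Real.sqrt I := h1
      _ ≤ Real.sqrt S + Real.sqrt I := by linarith [hkey]
      _ ≤ C * Real.sqrt δ + A * C * Real.sqrt δ := by linarith [hsqS, hsqI]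
      _ = B * Real.sqrt δ := by rw [hBdef]; ring
  -- square and contradict
  have hsq : (2 * |lam|) ^ 2 ≤ (B * Real.sqrt δ) ^ 2 :=
    pow_le_pow_left₀ (by positivity) h2lam 2
  have hsqδ : Real.sqrt δ ^ 2 = δ := Real.sq_sqrt hδ0.le
  have hfin : 4 * lam ^ 2 ≤ B ^ 2 * δ := by
    have h1 : (2 * |lam|) ^ 2 = 4 * lam ^ 2 := by
      rw [mul_pow, sq_abs]; ring
    have h2 : (B * Real.sqrt δ) ^ 2 = B ^ 2 * δ := by
      rw [mul_pow, hsqδ]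
    linarith [hsq]
  have hδ2 : δ ≤ lam ^ 2 / (B ^ 2 + 1) := min_le_right _ _
  have hδ3 : δ * (B ^ 2 + 1) ≤ lam ^ 2 := by
    rw [← le_div_iff₀ (by positivity)]
    exact hδ2
  have hlam2 : 0 < lam ^ 2 := by positivity
  nlinarith [hfin, hδ3, hδ0, sq_nonneg B]
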